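/- Equivalence of the parametric paperclip with the implicit paperclip: let t < 0, set a = (1 − e^{2t})^{−1/2} (so a > 1), and for θ ∈ (−π, π) let z = −Log(a + e^{iθ}) + ½·log(a² − 1), using the principal complex logarithm. Then cosh(Re z) = e^{−t}·cos(Im z); that is, the parametric curve coincides with the paperclip solution cosh x = e^{−t}cos y. -/

import Mathlib

set_option maxHeartbeats 1000000


/-- Equivalence of the parametric paperclip with the implicit paperclip: for
`t < 0`, `a = (1 − e^{2t})^{−1/2}` and `z = −Log(a + e^{iθ}) + ½ log(a² − 1)`,
one has `cosh(Re z) = e^{−t} cos(Im z)`. -/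
theorem paperclip_parametric_eq_implicit (t θ : ℝ) (ht : t < 0)
    (hθ : θ ∈ Set.Ioo (-Real.pi) Real.pi) :
    Real.cosh
        ((-Complex.log (((1 - Real.exp (2 * t)) ^ (-(1 : ℝ) / 2) : ℝ) +
            Complex.exp ((θ : ℂ) * Complex.I)) +
          (((1 / 2) * Real.log (((1 - Real.exp (2 * t)) ^ (-(1 : ℝ) / 2) : ℝ) ^ 2 - 1) : ℝ) :
            ℂ)).re) =
      Real.exp (-t) *
        Real.cos
          ((-Complex.log (((1 - Real.exp (2 * t)) ^ (-(1 : ℝ) / 2) : ℝ) +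
              Complex.exp ((θ : ℂ) * Complex.I)) +
            (((1 / 2) * Real.log (((1 - Real.exp (2 * t)) ^ (-(1 : ℝ) / 2) : ℝ) ^ 2 - 1) : ℝ) :
              ℂ)).im) := by
  have hb : 0 < 1 - Real.exp (2 * t) := by
    have : Real.exp (2 * t) < 1 := by
      rw [Real.exp_lt_one_iff]; linarith
    linarith
  have hb1 : 1 - Real.exp (2 * t) < 1 := by
    have := Real.exp_pos (2 * t); linarith
  set A : ℝ := (1 - Real.exp (2 * t)) ^ (-(1 : ℝ) / 2) with hA
  have hA0 : 0 < A := Real.rpow_pos_of_pos hb _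
  have hA2 : A ^ 2 = (1 - Real.exp (2 * t))⁻¹ := by
    rw [hA, ← Real.rpow_natCast ((1 - Real.exp (2 * t)) ^ (-(1 : ℝ) / 2)) 2,
      ← Real.rpow_mul hb.le]
    norm_num
    exact Real.rpow_neg_one _
  have hiv : 1 < (1 - Real.exp (2 * t))⁻¹ := (one_lt_inv₀ hb).mpr hb1
  have hA1 : 1 < A := by nlinarith
  have hs : 0 < A ^ 2 - 1 := by nlinarith
  set w : ℂ := (A : ℂ) + Complex.exp ((θ : ℂ) * Complex.I) with hw
  have hwre : w.re = A + Real.cos θ := by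
    simp [hw, Complex.exp_ofReal_mul_I_re]
  have hwim : w.im = Real.sin θ := by
    simp [hw, Complex.exp_ofReal_mul_I_im]
  have hwrepos : 0 < w.re := by
    rw [hwre]; nlinarith [Real.neg_one_le_cos θ]
  have hw0 : w ≠ 0 := by
    intro h; rw [h] at hwrepos; simp at hwrepos
  set r : ℝ := ‖w‖ with hr
  have hr0 : 0 < r := norm_pos_iff.mpr hw0
  have hr2 : r ^ 2 = A ^ 2 + 2 * A * Real.cos θ + 1 := by
    rw [hr, Complex.sq_norm, Complex.normSq_apply, hwre, hwim]
    nlinarith [Real.sin_sq_add_cos_sq θ]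
  -- exp of the constant
  have hexpc : Real.exp ((1 / 2) * Real.log (A ^ 2 - 1)) = Real.sqrt (A ^ 2 - 1) := by
    rw [Real.sqrt_eq_rpow, Real.rpow_def_of_pos hs]
    ring_nf
  have hsq : Real.sqrt (A ^ 2 - 1) ^ 2 = A ^ 2 - 1 := Real.sq_sqrt hs.le
  have hsqpos : 0 < Real.sqrt (A ^ 2 - 1) := Real.sqrt_pos.mpr hs
  have het : Real.exp (-t) = A / Real.sqrt (A ^ 2 - 1) := by
    have hprod : A ^ 2 * (1 - Real.exp (2 * t)) = 1 := by
      rw [hA2]; field_simp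
    have hA2ne : (A : ℝ) ^ 2 ≠ 0 := by positivity
    have he2t : Real.exp (2 * t) = (A ^ 2 - 1) / A ^ 2 := by
      rw [eq_div_iff hA2ne]; linear_combination -hprod
    have h1 : Real.exp (-t) ^ 2 = A ^ 2 / (A ^ 2 - 1) := by
      rw [sq, ← Real.exp_add, show -t + -t = -(2 * t) by ring, Real.exp_neg, he2t,
        inv_div]
    have h2 : (A / Real.sqrt (A ^ 2 - 1)) ^ 2 = A ^ 2 / (A ^ 2 - 1) := by
      rw [div_pow, hsq]
    have hp1 : 0 < Real.exp (-t) := Real.exp_pos _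
    have hp2 : 0 < A / Real.sqrt (A ^ 2 - 1) := by positivity
    nlinarith [h1, h2]
  -- compute real and imaginary parts
  have hre : (-Complex.log w + (((1 / 2) * Real.log (A ^ 2 - 1) : ℝ) : ℂ)).re =
      -Real.log r + (1 / 2) * Real.log (A ^ 2 - 1) := by
    simp [Complex.log_re, hr]
  have him : (-Complex.log w + (((1 / 2) * Real.log (A ^ 2 - 1) : ℝ) : ℂ)).im =
      -Complex.arg w := by
    simp [Complex.log_im]
  rw [hre, him, Real.cos_neg, Complex.cos_arg hw0, hwre, ← hr, Real.cosh_eq]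
  rw [show -Real.log r + 1 / 2 * Real.log (A ^ 2 - 1) =
    1 / 2 * Real.log (A ^ 2 - 1) + -Real.log r by ring, Real.exp_add, hexpc,
    Real.exp_neg, Real.exp_log hr0, neg_add, Real.exp_add, Real.exp_neg, hexpc,
    het]
  simp only [Real.exp_neg, Real.exp_log hr0, inv_inv]
  have hsne : Real.sqrt (A ^ 2 - 1) ≠ 0 := ne_of_gt hsqpos
  have hrne : r ≠ 0 := ne_of_gt hr0
  field_simp
  linear_combination hr2 + hsq
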